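/- Let S be a discrete random variable and Y0, Y1 binary random variables with P(Y1=1) > 0. Define Δ = Σ_s P(S=s)·max(0, P(Y1=1|S=s) - P(Y0=1|S=s)). Then P(Y0=0, Y1=1) ≥ Δ, and hence P(Y0=0 | Y1=1) ≥ Δ / P(Y1=1). -/

import Mathlib

open MeasureTheory

theorem covariate_lower_bound {Ω : Type*} [MeasurableSpace Ω] (P : Measure Ω)
    [IsProbabilityMeasure P] {σ : Type*} [Fintype σ] [MeasurableSpace σ]
    [MeasurableSingletonClass σ]
    (S : Ω → σ) (Y0 Y1 : Ω → Bool)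
    (hS : Measurable S) (hY0 : Measurable Y0) (hY1 : Measurable Y1)
    (hSpos : ∀ s : σ, 0 < (P {ω | S ω = s}).toReal)
    (hpos : 0 < (P {ω | Y1 ω = true}).toReal) :
    (P ({ω | Y0 ω = false} ∩ {ω | Y1 ω = true})).toReal ≥
        (∑ s : σ, (P {ω | S ω = s}).toReal *
          max 0 ((P ({ω | Y1 ω = true} ∩ {ω | S ω = s})).toReal / (P {ω | S ω = s}).toReal
            - (P ({ω | Y0 ω = true} ∩ {ω | S ω = s})).toReal / (P {ω | S ω = s}).toReal)) ∧
      (P ({ω | Y0 ω = false} ∩ {ω | Y1 ω = true})).toReal / (P {ω | Y1 ω = true}).toReal ≥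
        (∑ s : σ, (P {ω | S ω = s}).toReal *
          max 0 ((P ({ω | Y1 ω = true} ∩ {ω | S ω = s})).toReal / (P {ω | S ω = s}).toReal
            - (P ({ω | Y0 ω = true} ∩ {ω | S ω = s})).toReal / (P {ω | S ω = s}).toReal))
          / (P {ω | Y1 ω = true}).toReal := by
  have hmeas : ∀ s : σ, MeasurableSet {ω | S ω = s} := fun s =>
    hS (measurableSet_singleton s)
  -- rewrite each term
  have hterm : ∀ s : σ,
      (P {ω | S ω = s}).toReal *
        max 0 ((P ({ω | Y1 ω = true} ∩ {ω | S ω = s})).toReal / (P {ω | S ω = s}).toReal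
          - (P ({ω | Y0 ω = true} ∩ {ω | S ω = s})).toReal / (P {ω | S ω = s}).toReal)
      ≤ (P ({ω | Y0 ω = false} ∩ {ω | Y1 ω = true} ∩ {ω | S ω = s})).toReal := by
    intro s
    have hp := hSpos s
    set p := (P {ω | S ω = s}).toReal with hpdef
    set a := (P ({ω | Y1 ω = true} ∩ {ω | S ω = s})).toReal with hadef
    set b := (P ({ω | Y0 ω = true} ∩ {ω | S ω = s})).toReal with hbdef
    set c := (P ({ω | Y0 ω = false} ∩ {ω | Y1 ω = true} ∩ {ω | S ω = s})).toReal with hcdef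
    have hsub : {ω | Y1 ω = true} ∩ {ω | S ω = s} ⊆
        ({ω | Y0 ω = true} ∩ {ω | S ω = s}) ∪
        ({ω | Y0 ω = false} ∩ {ω | Y1 ω = true} ∩ {ω | S ω = s}) := by
      intro ω ⟨h1, h2⟩
      rcases Bool.eq_false_or_eq_true (Y0 ω) with h | h
      · exact Or.inl ⟨h, h2⟩
      · exact Or.inr ⟨⟨h, h1⟩, h2⟩
    have hab : a ≤ b + c := by
      have h1 : P ({ω | Y1 ω = true} ∩ {ω | S ω = s}) ≤
          P ({ω | Y0 ω = true} ∩ {ω | S ω = s}) +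
          P ({ω | Y0 ω = false} ∩ {ω | Y1 ω = true} ∩ {ω | S ω = s}) :=
        le_trans (measure_mono hsub) (measure_union_le _ _)
      rw [hadef, hbdef, hcdef, ← ENNReal.toReal_add (measure_ne_top _ _) (measure_ne_top _ _)]
      exact ENNReal.toReal_mono (by finiteness) h1
    have hc : 0 ≤ c := ENNReal.toReal_nonneg
    have : p * max 0 (a / p - b / p) = max 0 (a - b) := by
      rw [mul_max_of_nonneg _ _ hp.le, mul_zero, mul_sub,
        mul_div_cancel₀ _ hp.ne', mul_div_cancel₀ _ hp.ne']
    rw [this]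
    exact max_le hc (by linarith)
  have hsum : ∑ s : σ, (P ({ω | Y0 ω = false} ∩ {ω | Y1 ω = true} ∩ {ω | S ω = s})).toReal
      = (P ({ω | Y0 ω = false} ∩ {ω | Y1 ω = true})).toReal := by
    rw [← ENNReal.toReal_sum (fun s _ => measure_ne_top _ _)]
    congr 1
    have hdisj : Pairwise (Function.onFun Disjoint
        (fun s : σ => {ω | Y0 ω = false} ∩ {ω | Y1 ω = true} ∩ {ω | S ω = s})) := by
      intro i j hij
      refine Set.disjoint_left.mpr ?_
      rintro ω ⟨_, hi⟩ ⟨_, hj⟩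
      exact hij (hi ▸ hj ▸ rfl)
    have hms : ∀ s : σ, MeasurableSet
        ({ω | Y0 ω = false} ∩ {ω | Y1 ω = true} ∩ {ω | S ω = s}) := fun s =>
      (((hY0 (measurableSet_singleton false)).inter
        (hY1 (measurableSet_singleton true))).inter (hmeas s))
    rw [← tsum_fintype (L := SummationFilter.unconditional _), ← measure_iUnion hdisj hms]
    congr 1
    ext ω
    simp [Set.mem_iUnion]
  have hmain : (P ({ω | Y0 ω = false} ∩ {ω | Y1 ω = true})).toReal ≥
      (∑ s : σ, (P {ω | S ω = s}).toReal *
        max 0 ((P ({ω | Y1 ω = true} ∩ {ω | S ω = s})).toReal / (P {ω | S ω = s}).toReal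
          - (P ({ω | Y0 ω = true} ∩ {ω | S ω = s})).toReal / (P {ω | S ω = s}).toReal)) := by
    calc _ ≤ ∑ s : σ, (P ({ω | Y0 ω = false} ∩ {ω | Y1 ω = true} ∩ {ω | S ω = s})).toReal :=
            Finset.sum_le_sum fun s _ => hterm s
      _ = _ := hsum
  exact ⟨hmain, by gcongr⟩
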